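/- Let (X, ρ) be a metric space, z₀ ∈ X fixed, k(x,y) = ρ(x,z₀) + ρ(y,z₀) - ρ(x,y), and let μ be a finite signed Borel measure on X with μ(X) = 0. Define the signed measure μ̃ by dμ̃(x) = exp(-ρ(x,z₀)) dμ(x). Then ∫∫ exp(-ρ(x,y)) dμ(x) dμ(y) = Σ_{ℓ=0}^∞ (1/ℓ!) ∫∫ k(x,y)^ℓ dμ̃(x) dμ̃(y), where the series converges. -/

import Mathlib

open MeasureTheory Real

/-- The double integral `∫∫ f d(μp - μm) d(μp - μm)` of a bounded measurable function
with respect to the finite signed measure `μ = μp - μm`, written out in terms of the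
nonnegative parts. -/
noncomputable def dblInt {X : Type*} [MeasurableSpace X] (f : X → X → ℝ)
    (μp μm : Measure X) : ℝ :=
  (∫ x, ∫ y, f x y ∂μp ∂μp) - (∫ x, ∫ y, f x y ∂μm ∂μp)
    - (∫ x, ∫ y, f x y ∂μp ∂μm) + (∫ x, ∫ y, f x y ∂μm ∂μm)

/-- The measure `μ̃` with density `x ↦ exp (-dist x z₀)` with respect to `μ`. -/
noncomputable def tilt {X : Type*} [MetricSpace X] [MeasurableSpace X]
    (z₀ : X) (μ : Measure X) : Measure X :=
  μ.withDensity fun x => ENNReal.ofReal (Real.exp (-dist x z₀))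

section Aux

variable {X : Type*} [MetricSpace X] [MeasurableSpace X] [BorelSpace X]

private lemma exp_ofReal_tsum (t : ℝ) (ht : 0 ≤ t) : ENNReal.ofReal (Real.exp t)
    = ∑' ℓ : ℕ, ENNReal.ofReal (t ^ ℓ / ℓ.factorial) := by
  have h : Real.exp t = ∑' ℓ : ℕ, t ^ ℓ / ℓ.factorial := by
    rw [Real.exp_eq_exp_ℝ, NormedSpace.exp_eq_tsum_div]
  rw [h]
  exact ENNReal.ofReal_tsum_of_nonneg (fun n => by positivity)
    (Real.summable_pow_div_factorial t)

private lemma tilt_finite (z₀ : X) (μ : Measure X) [IsFiniteMeasure μ] :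
    IsFiniteMeasure (tilt z₀ μ) := by
  constructor
  rw [tilt, withDensity_apply _ MeasurableSet.univ, Measure.restrict_univ]
  calc ∫⁻ x, ENNReal.ofReal (Real.exp (-dist x z₀)) ∂μ
      ≤ ∫⁻ _, 1 ∂μ := by
        refine lintegral_mono fun x => ?_
        exact ENNReal.ofReal_le_one.mpr (Real.exp_le_one_iff.mpr (neg_nonpos.mpr dist_nonneg))
    _ < ⊤ := by simp [measure_lt_top]

private lemma master (z₀ : X) (μ₁ μ₂ : Measure X) [IsFiniteMeasure μ₁] [IsFiniteMeasure μ₂] :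
    Summable (fun ℓ : ℕ => (1 / (Nat.factorial ℓ) : ℝ) *
      ∫ x, ∫ y, (dist x z₀ + dist y z₀ - dist x y) ^ ℓ ∂(tilt z₀ μ₁) ∂(tilt z₀ μ₂)) ∧
    (∑' ℓ : ℕ, (1 / (Nat.factorial ℓ) : ℝ) *
      ∫ x, ∫ y, (dist x z₀ + dist y z₀ - dist x y) ^ ℓ ∂(tilt z₀ μ₁) ∂(tilt z₀ μ₂))
      = ∫ x, ∫ y, Real.exp (-dist x y) ∂μ₁ ∂μ₂ := by
  haveI := tilt_finite z₀ μ₁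
  haveI := tilt_finite z₀ μ₂
  set k : X → X → ℝ := fun x y => dist x z₀ + dist y z₀ - dist x y with hk
  have hk0 : ∀ x y, 0 ≤ k x y := by
    intro x y
    have h := dist_triangle x z₀ y
    have h2 : dist z₀ y = dist y z₀ := dist_comm _ _
    simp only [hk]; linarith
  have hk2 : ∀ x y, k x y ≤ 2 * dist y z₀ := by
    intro x y
    have h := dist_triangle x y z₀
    simp only [hk]; linarith
  have hkconty : ∀ x, Continuous fun y => k x y := by
    intro x; simp only [hk]; fun_prop
  have hkcontx : ∀ y, Continuous fun x => k x y := by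
    intro y; simp only [hk]; fun_prop
  -- the real pointwise bound
  have hbd : ∀ (ℓ : ℕ) (x y : X),
      Real.exp (-dist y z₀) * (k x y ^ ℓ / ℓ.factorial) ≤ 2 ^ ℓ := by
    intro ℓ x y
    set b := dist y z₀ with hb
    have hb0 : 0 ≤ b := dist_nonneg
    have h1 : k x y ^ ℓ ≤ (2 * b) ^ ℓ := pow_le_pow_left₀ (hk0 x y) (hk2 x y) ℓ
    have h2 : b ^ ℓ / ℓ.factorial ≤ Real.exp b := Real.pow_div_factorial_le_exp b hb0 ℓ
    have h3 : Real.exp (-b) * (k x y ^ ℓ / ℓ.factorial)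
        ≤ Real.exp (-b) * ((2 * b) ^ ℓ / ℓ.factorial) := by
      have := Real.exp_pos (-b)
      gcongr
    refine h3.trans ?_
    have h4 : (2 * b) ^ ℓ / ℓ.factorial = 2 ^ ℓ * (b ^ ℓ / ℓ.factorial) := by
      rw [mul_pow]; ring
    rw [h4, ← mul_assoc, mul_comm (Real.exp (-b)) ((2:ℝ) ^ ℓ), mul_assoc]
    have h5 : Real.exp (-b) * (b ^ ℓ / ℓ.factorial) ≤ Real.exp (-b) * Real.exp b := by
      have := Real.exp_pos (-b)
      gcongr
    calc (2:ℝ) ^ ℓ * (Real.exp (-b) * (b ^ ℓ / ℓ.factorial))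
        ≤ 2 ^ ℓ * (Real.exp (-b) * Real.exp b) := by
          have : (0:ℝ) ≤ 2 ^ ℓ := by positivity
          gcongr
      _ = 2 ^ ℓ := by rw [← Real.exp_add]; simp
  -- the inner lintegrals
  set g : ℕ → X → ENNReal := fun ℓ x =>
    ∫⁻ y, ENNReal.ofReal (Real.exp (-dist y z₀) * (k x y ^ ℓ / ℓ.factorial)) ∂μ₁ with hg
  have hgmeasy : ∀ (ℓ : ℕ) (x : X), Measurable fun y =>
      ENNReal.ofReal (Real.exp (-dist y z₀) * (k x y ^ ℓ / ℓ.factorial)) := by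
    intro ℓ x
    have : Continuous fun y => Real.exp (-dist y z₀) * (k x y ^ ℓ / ℓ.factorial) := by
      have := hkconty x; fun_prop
    exact this.measurable.ennreal_ofReal
  have hgfin : ∀ ℓ x, g ℓ x ≠ ⊤ := by
    intro ℓ x
    have hle : g ℓ x ≤ ENNReal.ofReal (2 ^ ℓ) * μ₁ Set.univ := by
      rw [hg]
      calc ∫⁻ y, ENNReal.ofReal (Real.exp (-dist y z₀) * (k x y ^ ℓ / ℓ.factorial)) ∂μ₁
          ≤ ∫⁻ _, ENNReal.ofReal (2 ^ ℓ) ∂μ₁ :=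
            lintegral_mono fun y => ENNReal.ofReal_le_ofReal (hbd ℓ x y)
        _ = ENNReal.ofReal (2 ^ ℓ) * μ₁ Set.univ := lintegral_const _
    exact ne_top_of_le_ne_top (ENNReal.mul_ne_top ENNReal.ofReal_ne_top (measure_ne_top _ _)) hle
  have hgcont : ∀ ℓ : ℕ, Continuous (g ℓ) := by
    intro ℓ
    refine continuous_iff_seqContinuous.mpr ?_
    intro u x hu
    refine tendsto_lintegral_of_dominated_convergence
      (fun _ => ENNReal.ofReal (2 ^ ℓ)) (fun n => hgmeasy ℓ (u n)) ?_ ?_ ?_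
    · intro n
      exact ae_of_all _ fun y => ENNReal.ofReal_le_ofReal (hbd ℓ (u n) y)
    · rw [lintegral_const]
      exact ENNReal.mul_ne_top ENNReal.ofReal_ne_top (measure_ne_top _ _)
    · refine ae_of_all _ fun y => ?_
      have hcont : Continuous fun x' => ENNReal.ofReal
          (Real.exp (-dist y z₀) * (k x' y ^ ℓ / ℓ.factorial)) := by
        refine ENNReal.continuous_ofReal.comp ?_
        have := hkcontx y; fun_prop
      exact (hcont.tendsto x).comp hu
  have hgmeas : ∀ ℓ : ℕ, Measurable (g ℓ) := fun ℓ => (hgcont ℓ).measurable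
  have hdmeas : Measurable fun x : X => ENNReal.ofReal (Real.exp (-dist x z₀)) := by fun_prop
  set L : ℕ → ENNReal := fun ℓ =>
    ∫⁻ x, ENNReal.ofReal (Real.exp (-dist x z₀)) * g ℓ x ∂μ₂ with hL
  set T : ENNReal := ∫⁻ x, ∫⁻ y, ENNReal.ofReal (Real.exp (-dist x y)) ∂μ₁ ∂μ₂ with hT
  have hTtop : T ≠ ⊤ := by
    have hle : T ≤ ∫⁻ _, μ₁ Set.univ ∂μ₂ := by
      refine lintegral_mono fun x => ?_
      calc ∫⁻ y, ENNReal.ofReal (Real.exp (-dist x y)) ∂μ₁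
          ≤ ∫⁻ _, 1 ∂μ₁ := lintegral_mono fun y =>
            ENNReal.ofReal_le_one.mpr (Real.exp_le_one_iff.mpr (neg_nonpos.mpr dist_nonneg))
        _ = μ₁ Set.univ := by simp
    refine ne_top_of_le_ne_top ?_ hle
    rw [lintegral_const]
    exact ENNReal.mul_ne_top (measure_ne_top _ _) (measure_ne_top _ _)
  -- the tsum of the L's equals T
  have hLT : ∑' ℓ, L ℓ = T := by
    rw [hL]; dsimp only
    rw [← lintegral_tsum (fun ℓ => (show
      AEMeasurable (fun x => ENNReal.ofReal (Real.exp (-dist x z₀)) * g ℓ x) μ₂ from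
        (hdmeas.mul (hgmeas ℓ)).aemeasurable))]
    refine lintegral_congr fun x => ?_
    rw [ENNReal.tsum_mul_left]
    have hgsum : ∑' ℓ, g ℓ x = ∫⁻ y, ENNReal.ofReal (Real.exp (-dist y z₀) *
        Real.exp (k x y)) ∂μ₁ := by
      rw [hg, ← lintegral_tsum (fun ℓ => (hgmeasy ℓ x).aemeasurable)]
      refine lintegral_congr fun y => ?_
      have : ∀ ℓ : ℕ, ENNReal.ofReal (Real.exp (-dist y z₀) * (k x y ^ ℓ / ℓ.factorial))
          = ENNReal.ofReal (Real.exp (-dist y z₀)) * ENNReal.ofReal (k x y ^ ℓ / ℓ.factorial) :=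
        fun ℓ => ENNReal.ofReal_mul (Real.exp_nonneg _)
      simp_rw [this]
      rw [ENNReal.tsum_mul_left, ← exp_ofReal_tsum (k x y) (hk0 x y),
        ← ENNReal.ofReal_mul (Real.exp_nonneg _)]
    rw [hgsum]
    have hm : Measurable fun y => ENNReal.ofReal (Real.exp (-dist y z₀) * Real.exp (k x y)) := by
      have : Continuous fun y => Real.exp (-dist y z₀) * Real.exp (k x y) := by
        have := hkconty x; fun_prop
      exact this.measurable.ennreal_ofReal
    rw [← lintegral_const_mul _ hm]
    refine lintegral_congr fun y => ?_
    rw [← ENNReal.ofReal_mul (Real.exp_nonneg _), ← Real.exp_add, ← Real.exp_add]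
    congr 1
    simp only [hk]; ring
  have hLtop : ∀ ℓ, L ℓ ≠ ⊤ := fun ℓ => ne_top_of_le_ne_top hTtop (hLT ▸ ENNReal.le_tsum ℓ)
  -- real-valued reformulation of the terms
  have hreal : ∀ ℓ : ℕ, (1 / (Nat.factorial ℓ) : ℝ) *
      (∫ x, ∫ y, k x y ^ ℓ ∂(tilt z₀ μ₁) ∂(tilt z₀ μ₂)) = (L ℓ).toReal := by
    intro ℓ
    have hinner : ∀ x : X, (1 / (Nat.factorial ℓ) : ℝ) * ∫ y, k x y ^ ℓ ∂(tilt z₀ μ₁)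
        = (g ℓ x).toReal := by
      intro x
      rw [← integral_const_mul]
      have heq : ∀ y : X, (1 / (Nat.factorial ℓ) : ℝ) * k x y ^ ℓ
          = k x y ^ ℓ / ℓ.factorial := fun y => by ring
      simp_rw [heq]
      rw [integral_eq_lintegral_of_nonneg_ae
        (ae_of_all _ fun y => div_nonneg (pow_nonneg (hk0 x y) ℓ) (Nat.cast_nonneg _))
        (((hkconty x).pow ℓ).div_const _).aestronglyMeasurable]
      congr 1
      rw [tilt, lintegral_withDensity_eq_lintegral_mul _ hdmeas
        (show Measurable (fun y => ENNReal.ofReal (k x y ^ ℓ / ℓ.factorial)) from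
          (((hkconty x).pow ℓ).div_const _).measurable.ennreal_ofReal)]
      rw [hg]
      refine lintegral_congr fun y => ?_
      simp only [Pi.mul_apply]
      rw [← ENNReal.ofReal_mul (Real.exp_nonneg _)]
    rw [← integral_const_mul, integral_congr_ae (ae_of_all _ hinner)]
    rw [integral_eq_lintegral_of_nonneg_ae (ae_of_all _ fun x => ENNReal.toReal_nonneg)
      ((hgmeas ℓ).ennreal_toReal.aestronglyMeasurable)]
    have heq2 : ∀ x : X, ENNReal.ofReal ((g ℓ x).toReal) = g ℓ x :=
      fun x => ENNReal.ofReal_toReal (hgfin ℓ x)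
    simp_rw [heq2]
    rw [tilt, lintegral_withDensity_eq_lintegral_mul _ hdmeas (hgmeas ℓ)]
    rfl
  -- real-valued reformulation of the exponential integral
  have hEreal : ∫ x, ∫ y, Real.exp (-dist x y) ∂μ₁ ∂μ₂ = T.toReal := by
    have hEfin : ∀ x : X, (∫⁻ y, ENNReal.ofReal (Real.exp (-dist x y)) ∂μ₁) ≠ ⊤ := by
      intro x
      refine ne_top_of_le_ne_top (measure_ne_top μ₁ Set.univ) ?_
      calc ∫⁻ y, ENNReal.ofReal (Real.exp (-dist x y)) ∂μ₁
          ≤ ∫⁻ _, 1 ∂μ₁ := lintegral_mono fun y =>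
            ENNReal.ofReal_le_one.mpr (Real.exp_le_one_iff.mpr (neg_nonpos.mpr dist_nonneg))
        _ = μ₁ Set.univ := by simp
    have hmi : Continuous fun x => ∫⁻ y, ENNReal.ofReal (Real.exp (-dist x y)) ∂μ₁ := by
      refine continuous_iff_seqContinuous.mpr ?_
      intro u x hu
      refine tendsto_lintegral_of_dominated_convergence (fun _ => 1)
        (fun n => ?_) (fun n => ae_of_all _ fun y => ?_) ?_ ?_
      · have : Continuous fun y => Real.exp (-dist (u n) y) := by fun_prop
        exact this.measurable.ennreal_ofReal
      · exact ENNReal.ofReal_le_one.mpr (Real.exp_le_one_iff.mpr (neg_nonpos.mpr dist_nonneg))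
      · rw [lintegral_const]; simp [measure_ne_top]
      · refine ae_of_all _ fun y => ?_
        have hcont : Continuous fun x' => ENNReal.ofReal (Real.exp (-dist x' y)) := by
          refine ENNReal.continuous_ofReal.comp ?_
          fun_prop
        exact (hcont.tendsto x).comp hu
    have hinner : ∀ x : X, ∫ y, Real.exp (-dist x y) ∂μ₁
        = (∫⁻ y, ENNReal.ofReal (Real.exp (-dist x y)) ∂μ₁).toReal := by
      intro x
      refine integral_eq_lintegral_of_nonneg_ae (ae_of_all _ fun y => by positivity) ?_
      have : Continuous fun y => Real.exp (-dist x y) := by fun_prop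
      exact this.aestronglyMeasurable
    rw [integral_congr_ae (ae_of_all _ hinner),
      integral_eq_lintegral_of_nonneg_ae (ae_of_all _ fun x => ENNReal.toReal_nonneg)
        (hmi.measurable.ennreal_toReal.aestronglyMeasurable)]
    congr 1
    refine lintegral_congr fun x => ENNReal.ofReal_toReal (hEfin x)
  have hfun : (fun ℓ : ℕ => (1 / (Nat.factorial ℓ) : ℝ) *
      ∫ x, ∫ y, (dist x z₀ + dist y z₀ - dist x y) ^ ℓ ∂(tilt z₀ μ₁) ∂(tilt z₀ μ₂))
      = fun ℓ => (L ℓ).toReal := funext fun ℓ => hreal ℓ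
  constructor
  · rw [hfun]
    exact ENNReal.summable_toReal (by rw [hLT]; exact hTtop)
  · rw [hfun, ← ENNReal.tsum_toReal_eq hLtop, hLT, hEreal]

end Aux

theorem stmt9 {X : Type*} [MetricSpace X] [MeasurableSpace X] [BorelSpace X]
    (z₀ : X) (μp μm : Measure X) [IsFiniteMeasure μp] [IsFiniteMeasure μm]
    (hzero : μp Set.univ = μm Set.univ) :
    Summable (fun ℓ : ℕ => (1 / (Nat.factorial ℓ) : ℝ) *
      dblInt (fun x y => (dist x z₀ + dist y z₀ - dist x y) ^ ℓ)
        (tilt z₀ μp) (tilt z₀ μm)) ∧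
    dblInt (fun x y => Real.exp (-dist x y)) μp μm
      = ∑' ℓ : ℕ, (1 / (Nat.factorial ℓ) : ℝ) *
          dblInt (fun x y => (dist x z₀ + dist y z₀ - dist x y) ^ ℓ)
            (tilt z₀ μp) (tilt z₀ μm) := by
  obtain ⟨h1s, h1e⟩ := master z₀ μp μp
  obtain ⟨h2s, h2e⟩ := master z₀ μm μp
  obtain ⟨h3s, h3e⟩ := master z₀ μp μm
  obtain ⟨h4s, h4e⟩ := master z₀ μm μm
  set c : ℕ → ℝ := fun ℓ => (1 / (Nat.factorial ℓ) : ℝ) with hc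
  set A : ℕ → ℝ := fun ℓ =>
    ∫ x, ∫ y, (dist x z₀ + dist y z₀ - dist x y) ^ ℓ ∂(tilt z₀ μp) ∂(tilt z₀ μp) with hA
  set B : ℕ → ℝ := fun ℓ =>
    ∫ x, ∫ y, (dist x z₀ + dist y z₀ - dist x y) ^ ℓ ∂(tilt z₀ μm) ∂(tilt z₀ μp) with hB
  set C : ℕ → ℝ := fun ℓ =>
    ∫ x, ∫ y, (dist x z₀ + dist y z₀ - dist x y) ^ ℓ ∂(tilt z₀ μp) ∂(tilt z₀ μm) with hC
  set D : ℕ → ℝ := fun ℓ =>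
    ∫ x, ∫ y, (dist x z₀ + dist y z₀ - dist x y) ^ ℓ ∂(tilt z₀ μm) ∂(tilt z₀ μm) with hD
  have key : (fun ℓ : ℕ => (1 / (Nat.factorial ℓ) : ℝ) *
      dblInt (fun x y => (dist x z₀ + dist y z₀ - dist x y) ^ ℓ)
        (tilt z₀ μp) (tilt z₀ μm))
      = fun ℓ => c ℓ * A ℓ - c ℓ * B ℓ - c ℓ * C ℓ + c ℓ * D ℓ := by
    funext ℓ
    simp only [dblInt, hc, hA, hB, hC, hD]
    ring
  constructor
  · rw [key]; exact ((h1s.sub h2s).sub h3s).add h4s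
  · rw [key, Summable.tsum_add ((h1s.sub h2s).sub h3s) h4s,
      Summable.tsum_sub (h1s.sub h2s) h3s, Summable.tsum_sub h1s h2s, h1e, h2e, h3e, h4e]
    simp [dblInt]
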